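/- For every positive integer m and every real number Λ > 1, one has ∑_{n=1}^∞ m^{1/Λ} / ( n^{1/Λ} (m+n) ) ≤ π / sin(π/Λ). -/

import Mathlib

open MeasureTheory Set Real

private lemma measaux (a : ℝ) : Measurable fun x : ℝ => x ^ (-a) / (1 + x) := by
  have h : Measurable fun x : ℝ => x ^ (-a) := by fun_prop
  exact h.div (measurable_const.add measurable_id)

lemma integrableOn_aux {a : ℝ} (ha : 0 < a) (ha1 : a < 1) :
    IntegrableOn (fun x : ℝ => x ^ (-a) / (1 + x)) (Ioi (0:ℝ)) := by
  have hmeas := measaux a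
  have h1 : IntegrableOn (fun x : ℝ => x ^ (-a) / (1 + x)) (Ioc (0:ℝ) 1) := by
    have hi : IntegrableOn (fun x : ℝ => x ^ (-a)) (Ioc (0:ℝ) 1) :=
      (intervalIntegral.intervalIntegrable_rpow' (by linarith)).1
    refine hi.mono' hmeas.aestronglyMeasurable.restrict ?_
    filter_upwards [ae_restrict_mem measurableSet_Ioc] with x hx
    have hx0 : 0 < x := hx.1
    have h1x : (0:ℝ) < 1 + x := by linarith
    rw [Real.norm_eq_abs, abs_div, abs_of_nonneg (Real.rpow_nonneg hx0.le _), abs_of_pos h1x]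
    exact div_le_self (Real.rpow_nonneg hx0.le _) (by linarith)
  have h2 : IntegrableOn (fun x : ℝ => x ^ (-a) / (1 + x)) (Ioi (1:ℝ)) := by
    have hi : IntegrableOn (fun x : ℝ => x ^ (-a - 1)) (Ioi (1:ℝ)) :=
      integrableOn_Ioi_rpow_of_lt (by linarith) one_pos
    refine hi.mono' hmeas.aestronglyMeasurable.restrict ?_
    filter_upwards [ae_restrict_mem measurableSet_Ioi] with x hx
    have hx0 : (0:ℝ) < x := lt_trans one_pos hx
    have h1x : (0:ℝ) < 1 + x := by linarith
    rw [Real.norm_eq_abs, abs_div, abs_of_nonneg (Real.rpow_nonneg hx0.le _), abs_of_pos h1x,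
      Real.rpow_sub hx0, Real.rpow_one]
    exact div_le_div_of_nonneg_left (Real.rpow_nonneg hx0.le _) hx0 (by linarith)
  have h := h1.union h2
  rwa [Ioc_union_Ioi_eq_Ioi (by norm_num : (0:ℝ) ≤ 1)] at h

private lemma beta_real {a : ℝ} (ha : 0 < a) (ha1 : a < 1) :
    ∫ x in (0:ℝ)..1, x ^ (-a) * (1 - x) ^ (a - 1) = π / Real.sin (π * a) := by
  have hs : 0 < Complex.re (1 - (a:ℂ)) := by
    simp only [Complex.sub_re, Complex.one_re, Complex.ofReal_re]; linarith
  have ht : 0 < Complex.re (a:ℂ) := by simpa using ha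
  have hb : Complex.betaIntegral (1 - a) a = (π : ℂ) / Complex.sin (π * a) := by
    have h1 := Complex.Gamma_mul_Gamma_eq_betaIntegral hs ht
    rw [sub_add_cancel, Complex.Gamma_one, one_mul] at h1
    rw [← h1, mul_comm, Complex.Gamma_mul_Gamma_one_sub]
  have h2 : Complex.betaIntegral (1 - a) a
      = ((∫ x in (0:ℝ)..1, x ^ (-a) * (1 - x) ^ (a - 1) : ℝ) : ℂ) := by
    rw [Complex.betaIntegral, ← intervalIntegral.integral_ofReal]
    refine intervalIntegral.integral_congr fun x hx => ?_
    rw [uIcc_of_le zero_le_one] at hx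
    rw [Complex.ofReal_mul, Complex.ofReal_cpow hx.1, Complex.ofReal_cpow (by linarith [hx.2])]
    push_cast
    ring_nf
  rw [h2] at hb
  have : ((π / Real.sin (π * a) : ℝ) : ℂ) = (π : ℂ) / Complex.sin (π * a) := by
    push_cast [Complex.ofReal_sin]
    norm_num
  rw [← this] at hb
  exact_mod_cast hb

private lemma integral_aux {a : ℝ} (ha : 0 < a) (ha1 : a < 1)
    (hbeta : ∫ x in (0:ℝ)..1, x ^ (-a) * (1 - x) ^ (a - 1) = π / Real.sin (π * a)) :
    ∫ x in Ioi (0:ℝ), x ^ (-a) / (1 + x) = π / Real.sin (π * a) := by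
  have himg : (fun x : ℝ => x / (1 + x)) '' Ioi 0 = Ioo (0:ℝ) 1 := by
    ext t
    constructor
    · rintro ⟨x, hx, rfl⟩
      have hx0 : (0:ℝ) < x := hx
      have h1 : (0:ℝ) < 1 + x := by linarith
      exact ⟨div_pos hx0 h1, by rw [div_lt_one h1]; linarith⟩
    · intro ht
      have h1t : (0:ℝ) < 1 - t := by linarith [ht.2]
      refine ⟨t / (1 - t), div_pos ht.1 h1t, ?_⟩
      field_simp
      ring
  have hderiv : ∀ x ∈ Ioi (0:ℝ), HasDerivWithinAt (fun x : ℝ => x / (1 + x))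
      (((1 + x) ^ 2)⁻¹) (Ioi 0) x := by
    intro x hx
    have hx0 : (0:ℝ) < x := hx
    have h1 : (1:ℝ) + x ≠ 0 := by positivity
    have h := (hasDerivAt_id x).div ((hasDerivAt_const x (1:ℝ)).add (hasDerivAt_id x)) h1
    convert h.hasDerivWithinAt using 1
    · rfl
    · rfl
    · rfl
    · simp only [Pi.add_apply, id]
      ring
  have hinj : InjOn (fun x : ℝ => x / (1 + x)) (Ioi 0) := by
    intro x hx y hy h
    have hx1 : (1:ℝ) + x ≠ 0 := by have : (0:ℝ) < x := hx; positivity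
    have hy1 : (1:ℝ) + y ≠ 0 := by have : (0:ℝ) < y := hy; positivity
    field_simp at h
    nlinarith [h]
  have key := integral_image_eq_integral_abs_deriv_smul measurableSet_Ioi hderiv hinj
      (fun t : ℝ => t ^ (-a) * (1 - t) ^ (a - 1))
  rw [himg] at key
  have hIoo : ∫ t in Ioo (0:ℝ) 1, t ^ (-a) * (1 - t) ^ (a-1) = π / Real.sin (π * a) := by
    rw [← hbeta, intervalIntegral.integral_of_le zero_le_one, integral_Ioc_eq_integral_Ioo]
  rw [hIoo] at key
  rw [key]
  refine setIntegral_congr_fun measurableSet_Ioi fun x hx => ?_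
  have hx0 : (0:ℝ) < x := hx
  have h1 : (0:ℝ) < 1 + x := by linarith
  have e1 : 1 - x / (1 + x) = (1 + x)⁻¹ := by field_simp; ring
  have e2 : (x / (1 + x)) ^ (-a) = x ^ (-a) * ((1 + x) ^ a) := by
    rw [div_eq_mul_inv, Real.mul_rpow hx0.le (inv_nonneg.mpr h1.le),
      Real.inv_rpow h1.le, Real.rpow_neg h1.le, inv_inv]
  have e3 : ((1 + x)⁻¹) ^ (a - 1) = ((1 + x) ^ (a - 1))⁻¹ := Real.inv_rpow h1.le _
  have e4 : (1 + x) ^ a * ((1 + x) ^ (a - 1))⁻¹ = 1 + x := by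
    rw [← Real.rpow_neg h1.le, ← Real.rpow_add h1]
    norm_num
  have h2 : (0:ℝ) < (1 + x) ^ 2 := by positivity
  symm
  rw [smul_eq_mul, abs_of_pos (inv_pos.mpr h2), e1, e2, e3]
  calc ((1 + x) ^ 2)⁻¹ * (x ^ (-a) * (1 + x) ^ a * ((1 + x) ^ (a - 1))⁻¹)
      = ((1 + x) ^ 2)⁻¹ * (x ^ (-a) * ((1 + x) ^ a * ((1 + x) ^ (a - 1))⁻¹)) := by ring
    _ = ((1 + x) ^ 2)⁻¹ * (x ^ (-a) * (1 + x)) := by rw [e4]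
    _ = x ^ (-a) / (1 + x) := by field_simp

private lemma integral_scaled {a c : ℝ} (ha : 0 < a) (hc : 0 < c)
    (hint : ∫ x in Ioi (0:ℝ), x ^ (-a) / (1 + x) = π / Real.sin (π * a)) :
    ∫ x in Ioi (0:ℝ), c ^ a * (x ^ (-a) / (c + x)) = π / Real.sin (π * a) := by
  have h := integral_comp_mul_left_Ioi (fun x : ℝ => c ^ a * (x ^ (-a) / (c + x))) 0 hc
  rw [mul_zero] at h
  have h2 : EqOn (fun x : ℝ => c ^ a * ((c * x) ^ (-a) / (c + c * x)))
      (fun x : ℝ => c⁻¹ * (x ^ (-a) / (1 + x))) (Ioi 0) := by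
    intro x hx
    have hx0 : (0:ℝ) < x := hx
    have h1x : (0:ℝ) < 1 + x := by linarith
    simp only
    rw [Real.mul_rpow hc.le hx0.le, show c + c * x = c * (1 + x) by ring,
      Real.rpow_neg hc.le]
    have hca : (0:ℝ) < c ^ a := Real.rpow_pos_of_pos hc a
    field_simp
  rw [setIntegral_congr_fun measurableSet_Ioi h2, integral_const_mul, hint, smul_eq_mul] at h
  have hcne : c⁻¹ ≠ 0 := inv_ne_zero hc.ne'
  exact (mul_left_cancel₀ hcne h).symm

private lemma integrable_scaled {a c : ℝ} (ha : 0 < a) (hc : 1 ≤ c)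
    (hbase : IntegrableOn (fun x : ℝ => x ^ (-a) / (1 + x)) (Ioi (0:ℝ))) :
    IntegrableOn (fun x : ℝ => c ^ a * (x ^ (-a) / (c + x))) (Ioi (0:ℝ)) := by
  have hc0 : (0:ℝ) < c := by linarith
  have hmeas : Measurable fun x : ℝ => c ^ a * (x ^ (-a) / (c + x)) := by
    have h : Measurable fun x : ℝ => x ^ (-a) := by fun_prop
    exact (h.div (measurable_const.add measurable_id)).const_mul _
  refine (hbase.const_mul (c ^ a)).mono' hmeas.aestronglyMeasurable.restrict ?_
  filter_upwards [ae_restrict_mem measurableSet_Ioi] with x hx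
  have hx0 : (0:ℝ) < x := hx
  have h1x : (0:ℝ) < 1 + x := by linarith
  have hcx : (0:ℝ) < c + x := by linarith
  have hca : (0:ℝ) < c ^ a := Real.rpow_pos_of_pos hc0 a
  rw [Real.norm_eq_abs, abs_of_nonneg (by positivity)]
  have : x ^ (-a) / (c + x) ≤ x ^ (-a) / (1 + x) :=
    div_le_div_of_nonneg_left (Real.rpow_nonneg hx0.le _) h1x (by linarith)
  nlinarith

lemma anti_aux {a c : ℝ} (ha : 0 < a) (hc : 0 < c) {x y : ℝ} (hx : 0 < x) (hxy : x ≤ y) :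
    c ^ a * (y ^ (-a) / (c + y)) ≤ c ^ a * (x ^ (-a) / (c + x)) := by
  have hca : (0:ℝ) ≤ c ^ a := Real.rpow_nonneg hc.le a
  refine mul_le_mul_of_nonneg_left ?_ hca
  refine div_le_div₀ (Real.rpow_nonneg hx.le _) (Real.rpow_le_rpow_of_nonpos hx hxy (by linarith))
    (by linarith) (by linarith)

private lemma main_aux (m : ℕ) (hm : 1 ≤ m) (Λ : ℝ) (hΛ : 1 < Λ)
    (a : ℝ) (ha_def : a = 1 / Λ)
    (f : ℝ → ℝ) (hf_def : f = fun x => (m:ℝ) ^ a * (x ^ (-a) / ((m:ℝ) + x)))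
    (hint : IntegrableOn f (Ioi (0:ℝ)))
    (hval : ∫ x in Ioi (0:ℝ), f x = π / Real.sin (π * a)) :
    ∑' n : ℕ, (m : ℝ) ^ (1 / Λ) / (((n : ℝ) + 1) ^ (1 / Λ) * ((m : ℝ) + ((n : ℝ) + 1))) ≤
      Real.pi / Real.sin (Real.pi / Λ) := by
  have hΛ0 : (0:ℝ) < Λ := by linarith
  have ha : 0 < a := by rw [ha_def]; positivity
  have ha1 : a < 1 := by rw [ha_def, div_lt_one hΛ0]; linarith
  set c : ℝ := (m:ℝ) with hc_def
  have hc1 : (1:ℝ) ≤ c := by rw [hc_def]; exact_mod_cast hm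
  have hc0 : (0:ℝ) < c := by linarith
  have hterm : ∀ n : ℕ,
      (m:ℝ) ^ (1/Λ) / (((n:ℝ)+1) ^ (1/Λ) * ((m:ℝ) + ((n:ℝ)+1))) = f ((n:ℝ)+1) := by
    intro n
    have hx0 : (0:ℝ) < (n:ℝ) + 1 := by positivity
    have hcx : (0:ℝ) < c + ((n:ℝ)+1) := by linarith
    have hxa : (0:ℝ) < ((n:ℝ)+1) ^ (1/Λ) := Real.rpow_pos_of_pos hx0 _
    rw [hf_def, ← ha_def]
    simp only
    rw [Real.rpow_neg hx0.le]
    field_simp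
    rw [hc_def]; ring
  have hfnonneg : ∀ x : ℝ, 0 < x → 0 ≤ f x := by
    intro x hx
    have h1 : (0:ℝ) < c + x := by linarith
    have h2 : (0:ℝ) ≤ x ^ (-a) := Real.rpow_nonneg hx.le _
    have h3 : (0:ℝ) ≤ c ^ a := Real.rpow_nonneg hc0.le _
    rw [hf_def]
    positivity
  have hπs : 0 < π / Real.sin (π * a) := by
    have hs : 0 < Real.sin (π * a) :=
      Real.sin_pos_of_pos_of_lt_pi (by have := Real.pi_pos; positivity)
        (by nlinarith [Real.pi_pos])
    have := Real.pi_pos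
    positivity
  rw [show Real.pi / Λ = π * a by rw [ha_def, mul_one_div]]
  refine Real.tsum_le_of_sum_range_le
    (fun n => by rw [hterm n]; exact hfnonneg _ (by positivity)) ?_
  intro N
  rw [Finset.sum_congr rfl (fun i _ => hterm i)]
  rcases N with _ | N
  · simpa using hπs.le
  · rw [← hval]
    have hanti : AntitoneOn f (Icc (1:ℝ) (1 + (N:ℝ))) := by
      intro x hx y hy hxy
      rw [hf_def]
      exact anti_aux ha hc0 (by linarith [hx.1]) hxy
    have hle1 := hanti.sum_le_integral
    have hsplit : ∑ i ∈ Finset.range (N+1), f ((i:ℝ)+1)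
        = (∑ i ∈ Finset.range N, f (1 + ((i:ℕ)+1 : ℕ))) + f 1 := by
      rw [Finset.sum_range_succ' (fun i => f ((i:ℝ)+1)) N]
      congr 1
      · refine Finset.sum_congr rfl fun i _ => ?_
        congr 1
        push_cast
        ring
      · norm_num
    rw [hsplit]
    have hf1 : f 1 ≤ ∫ x in Ioc (0:ℝ) 1, f x := by
      have he : f 1 = ∫ _ in Ioc (0:ℝ) 1, f 1 := by
        rw [setIntegral_const, Real.volume_real_Ioc]
        norm_num
      rw [he]
      refine setIntegral_mono_on (integrableOn_const ?_)
        (hint.mono_set Ioc_subset_Ioi_self) measurableSet_Ioc fun x hx => ?_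
      · rw [Real.volume_Ioc]; norm_num
      · rw [hf_def]; exact anti_aux ha hc0 hx.1 hx.2
    have hle2 : (∑ i ∈ Finset.range N, f (1 + ((i:ℕ)+1 : ℕ)))
        ≤ ∫ x in Ioc (1:ℝ) (1 + (N:ℝ)), f x := by
      rw [← intervalIntegral.integral_of_le (by linarith [(Nat.cast_nonneg N : (0:ℝ) ≤ (N:ℝ))] : (1:ℝ) ≤ 1 + (N:ℝ))]
      exact hle1
    have hunion : (∫ x in Ioc (0:ℝ) 1, f x) + ∫ x in Ioc (1:ℝ) (1 + (N:ℝ)), f x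
        = ∫ x in Ioc (0:ℝ) (1 + (N:ℝ)), f x := by
      have h1N : (1:ℝ) ≤ 1 + (N:ℝ) := by linarith [(Nat.cast_nonneg N : (0:ℝ) ≤ (N:ℝ))]
      have hu := setIntegral_union (μ := volume) (f := f) (t := Ioc (1:ℝ) (1 + (N:ℝ))) (Set.Ioc_disjoint_Ioc_of_le le_rfl)
        measurableSet_Ioc (hint.mono_set Ioc_subset_Ioi_self)
        (hint.mono_set (fun x hx => lt_trans one_pos hx.1))
      rw [Ioc_union_Ioc_eq_Ioc (zero_le_one) h1N] at hu
      exact hu.symm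
    have hmono : ∫ x in Ioc (0:ℝ) (1 + (N:ℝ)), f x ≤ ∫ x in Ioi (0:ℝ), f x := by
      refine setIntegral_mono_set hint ?_ (Ioc_subset_Ioi_self.eventuallyLE)
      filter_upwards [ae_restrict_mem measurableSet_Ioi] with x hx using hfnonneg x hx
    linarith

/-- For every positive integer m and real Λ > 1,
∑_{n=1}^∞ m^{1/Λ} / (n^{1/Λ} (m+n)) ≤ π / sin(π/Λ). -/
theorem sum_le_pi_div_sin (m : ℕ) (hm : 1 ≤ m) (Λ : ℝ) (hΛ : 1 < Λ) :
    ∑' n : ℕ, (m : ℝ) ^ (1 / Λ) / (((n : ℝ) + 1) ^ (1 / Λ) * ((m : ℝ) + ((n : ℝ) + 1))) ≤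
      Real.pi / Real.sin (Real.pi / Λ) := by
  have hΛ0 : (0:ℝ) < Λ := by linarith
  set a : ℝ := 1 / Λ with ha_def
  have ha : 0 < a := by rw [ha_def]; positivity
  have ha1 : a < 1 := by rw [ha_def, div_lt_one hΛ0]; linarith
  have hc1 : (1:ℝ) ≤ (m:ℝ) := by exact_mod_cast hm
  have hc0 : (0:ℝ) < (m:ℝ) := by linarith
  set f : ℝ → ℝ := fun x => (m:ℝ) ^ a * (x ^ (-a) / ((m:ℝ) + x)) with hf_def
  have hint : IntegrableOn f (Ioi (0:ℝ)) :=
    integrable_scaled ha hc1 (integrableOn_aux ha ha1)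
  have hval : ∫ x in Ioi (0:ℝ), f x = π / Real.sin (π * a) :=
    integral_scaled ha hc0 (integral_aux ha ha1 (beta_real ha ha1))
  exact main_aux m hm Λ hΛ a ha_def f hf_def hint hval
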